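/- Let W:(ℂ*)²→ℂ be given by W(x,y)=(1+x+y)³/(xy) − 6 (the disk potential of a monotone Lagrangian torus in the cubic surface Bl₆ℂP²). Then (1,1) is a nondegenerate (Morse) critical point of W with critical value 21: one has W(1,1)=21, ∂W/∂x(1,1)=∂W/∂y(1,1)=0, and the Hessian matrix of second partial derivatives of W at (1,1) equals (18,−9;−9,18), whose determinant 243 is nonzero. -/

import Mathlib

/-- The disk potential of a monotone Lagrangian torus in the cubic surface `Bl₆ℂP²`. -/
noncomputable def Wcubic (x y : ℂ) : ℂ := (1 + x + y) ^ 3 / (x * y) - 6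

open Filter in
private lemma evne : ∀ᶠ x : ℂ in nhds 1, x ≠ 0 :=
  eventually_ne_nhds one_ne_zero

/-- derivative in second variable at 1, for x ≠ 0 -/
private lemma hDY (x : ℂ) (hx : x ≠ 0) :
    HasDerivAt (fun y => Wcubic x y) ((3*(2+x)^2 - (2+x)^3) * x⁻¹) 1 := by
  have h1 := (((hasDerivAt_id (1:ℂ)).const_add (1+x)).pow 3)
  have h2 := (hasDerivAt_id (1:ℂ)).const_mul x
  have hx1 : x * (1:ℂ) ≠ 0 := by simpa using hx
  have h := (h1.div h2 hx1).sub_const 6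
  refine h.congr_deriv ?_
  simp only [id, Pi.pow_apply]
  push_cast
  field_simp
  ring

/-- derivative in first variable at 1, for y ≠ 0 -/
private lemma hDX (y : ℂ) (hy : y ≠ 0) :
    HasDerivAt (fun x => Wcubic x y) ((3*(2+y)^2 - (2+y)^3) * y⁻¹) 1 := by
  have h1 := ((((hasDerivAt_id (1:ℂ)).const_add 1).add_const y).pow 3)
  have h2 := (hasDerivAt_id (1:ℂ)).mul_const y
  have hy1 : (1:ℂ) * y ≠ 0 := by simpa using hy
  have h := (h1.div h2 hy1).sub_const 6
  refine h.congr_deriv ?_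
  simp only [id, Pi.pow_apply]
  push_cast
  field_simp
  ring

/-- derivative in first variable with y = 1, at a general x ≠ 0 -/
private lemma hDX1 (x : ℂ) (hx : x ≠ 0) :
    HasDerivAt (fun x' => Wcubic x' 1) ((3*(2+x)^2*x - (2+x)^3) * (x^2)⁻¹) x := by
  have h1 := ((((hasDerivAt_id x).const_add 1).add_const 1).pow 3)
  have h2 := (hasDerivAt_id x).mul_const 1
  have hx1 : x * (1:ℂ) ≠ 0 := by simpa using hx
  have h := (h1.div h2 hx1).sub_const 6
  refine h.congr_deriv ?_
  simp only [id, Pi.pow_apply]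
  push_cast
  field_simp
  ring

/-- derivative in second variable with x = 1, at a general y ≠ 0 -/
private lemma hDY1 (y : ℂ) (hy : y ≠ 0) :
    HasDerivAt (fun y' => Wcubic 1 y') ((3*(2+y)^2*y - (2+y)^3) * (y^2)⁻¹) y := by
  have h1 := (((hasDerivAt_id y).const_add (1+1)).pow 3)
  have h2 := (hasDerivAt_id y).const_mul 1
  have hy1 : (1:ℂ) * y ≠ 0 := by simpa using hy
  have h := (h1.div h2 hy1).sub_const 6
  refine h.congr_deriv ?_
  simp only [id, Pi.pow_apply]
  push_cast
  field_simp
  ring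

private lemma hMixed : HasDerivAt (fun x : ℂ => (3*(2+x)^2 - (2+x)^3) * x⁻¹) (-9) 1 := by
  have hb : HasDerivAt (fun x : ℂ => 2 + x) 1 1 := (hasDerivAt_id 1).const_add 2
  have h1 := ((hb.pow 2).const_mul 3).sub (hb.pow 3)
  have h2 := hasDerivAt_inv (one_ne_zero : (1:ℂ) ≠ 0)
  have h := h1.mul h2
  refine h.congr_deriv ?_
  push_cast
  norm_num

private lemma hPure : HasDerivAt (fun x : ℂ => (3*(2+x)^2*x - (2+x)^3) * (x^2)⁻¹) 18 1 := by
  have hb : HasDerivAt (fun x : ℂ => 2 + x) 1 1 := (hasDerivAt_id 1).const_add 2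
  have h1 := (((hb.pow 2).const_mul 3).mul (hasDerivAt_id 1)).sub (hb.pow 3)
  have h2 := ((hasDerivAt_id (1:ℂ)).pow 2).inv (by norm_num)
  have h := h1.mul h2
  refine h.congr_deriv ?_
  push_cast
  norm_num

theorem cubic_surface_morse_critical_point :
    Wcubic 1 1 = 21 ∧
    deriv (fun x => Wcubic x 1) 1 = 0 ∧
    deriv (fun y => Wcubic 1 y) 1 = 0 ∧
    (!![deriv (fun x => deriv (fun x' => Wcubic x' 1) x) 1,
        deriv (fun x => deriv (fun y => Wcubic x y) 1) 1;
        deriv (fun y => deriv (fun x => Wcubic x y) 1) 1,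
        deriv (fun y => deriv (fun y' => Wcubic 1 y') y) 1]
      = !![(18 : ℂ), -9; -9, 18]) ∧
    (!![(18 : ℂ), -9; -9, 18]).det = 243 ∧ (243 : ℂ) ≠ 0 := by
  have e00 : deriv (fun x => deriv (fun x' => Wcubic x' 1) x) 1 = 18 := by
    have he : (fun x : ℂ => deriv (fun x' => Wcubic x' 1) x)
        =ᶠ[nhds 1] fun x => (3*(2+x)^2*x - (2+x)^3) * (x^2)⁻¹ :=
      evne.mono fun x hx => (hDX1 x hx).deriv
    rw [he.deriv_eq, hPure.deriv]
  have e01 : deriv (fun x => deriv (fun y => Wcubic x y) 1) 1 = -9 := by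
    have he : (fun x : ℂ => deriv (fun y => Wcubic x y) 1)
        =ᶠ[nhds 1] fun x => (3*(2+x)^2 - (2+x)^3) * x⁻¹ :=
      evne.mono fun x hx => (hDY x hx).deriv
    rw [he.deriv_eq, hMixed.deriv]
  have e10 : deriv (fun y => deriv (fun x => Wcubic x y) 1) 1 = -9 := by
    have he : (fun y : ℂ => deriv (fun x => Wcubic x y) 1)
        =ᶠ[nhds 1] fun y => (3*(2+y)^2 - (2+y)^3) * y⁻¹ :=
      evne.mono fun y hy => (hDX y hy).deriv
    rw [he.deriv_eq, hMixed.deriv]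
  have e11 : deriv (fun y => deriv (fun y' => Wcubic 1 y') y) 1 = 18 := by
    have he : (fun y : ℂ => deriv (fun y' => Wcubic 1 y') y)
        =ᶠ[nhds 1] fun y => (3*(2+y)^2*y - (2+y)^3) * (y^2)⁻¹ :=
      evne.mono fun y hy => (hDY1 y hy).deriv
    rw [he.deriv_eq, hPure.deriv]
  refine ⟨by norm_num [Wcubic], ?_, ?_, ?_, ?_, by norm_num⟩
  · rw [(hDX1 1 one_ne_zero).deriv]; norm_num
  · rw [(hDY1 1 one_ne_zero).deriv]; norm_num
  · rw [e00, e01, e10, e11]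
  · simp [Matrix.det_fin_two_of]; norm_num
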